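/- Let b ≥ 2 be an integer, let g ≥ 1 be an integer, and let n ≥ 6bg be an integer. Then for every real x ≥ 2n − 2bg, the quadratic ψ(x) = x² + (n − 4bg − 4g + 4)x − 2n² + 4bgn + 4gn + 2n − 2b²g² − 4bg² − 2bg − 4g satisfies ψ(x) > 0. -/

import Mathlib

open scoped Classical ENNReal

noncomputable def signlessLaplacian {V : Type*} [Fintype V] [DecidableEq V]
    (G : SimpleGraph V) : Matrix V V ℝ :=
  Matrix.of fun u v =>
    (if u = v then ((G.neighborSet u).ncard : ℝ) else 0) + (if G.Adj u v then 1 else 0)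

/-- The `Q`-index: the largest eigenvalue of the signless Laplacian `D(G) + A(G)`. -/
noncomputable def qIndex {V : Type*} [Fintype V] [DecidableEq V]
    (G : SimpleGraph V) : ℝ :=
  sSup (spectrum ℝ (signlessLaplacian G))

/-- `K_s ∨ (K_{ns 0} ∪ K_{ns 1} ∪ ⋯)` : the join of a clique of size `s` with a
disjoint union of cliques of sizes `ns i`. -/
def joinCliques (s : ℕ) {t : ℕ} (ns : Fin t → ℕ) :
    SimpleGraph (Fin s ⊕ (Σ i : Fin t, Fin (ns i))) where
  Adj u v := u ≠ v ∧ ((∃ a, u = Sum.inl a) ∨ (∃ a, v = Sum.inl a) ∨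
      ∃ (i : Fin t) (x y : Fin (ns i)), u = Sum.inr ⟨i, x⟩ ∧ v = Sum.inr ⟨i, y⟩)
  symm := Std.Symm.mk <| by
    rintro u v ⟨hne, h⟩
    refine ⟨hne.symm, ?_⟩
    rcases h with ⟨a, ha⟩ | ⟨a, ha⟩ | ⟨i, x, y, hx, hy⟩
    · exact Or.inr (Or.inl ⟨a, ha⟩)
    · exact Or.inl ⟨a, ha⟩
    · exact Or.inr (Or.inr ⟨i, y, x, hy, hx⟩)
  loopless := ⟨fun u h => h.1 rfl⟩

/-- `c(G - S)`: number of connected components after deleting the vertex set `S`. -/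
noncomputable def numComp {V : Type*} (G : SimpleGraph V) (S : Set V) : ℕ :=
  Nat.card (G.induce Sᶜ).ConnectedComponent

/-- The `l`-toughness `t_l(G) = min { |S| / c(G-S) : S ⊂ V(G), c(G-S) ≥ l }`,
with value `+∞` (the empty infimum in `ℝ≥0∞`) if no such `S` exists. -/
noncomputable def lToughness {V : Type*} [Fintype V] (G : SimpleGraph V) (l : ℕ) : ℝ≥0∞ :=
  ⨅ (S : Finset V) (_ : l ≤ numComp G (S : Set V)),
    (S.card : ℝ≥0∞) / (numComp G (S : Set V) : ℝ≥0∞)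


/-- For integers `b ≥ 2`, `g ≥ 1` and `n ≥ 6bg`: for every real `x ≥ 2n − 2bg`, the
quadratic `ψ(x) = x² + (n − 4bg − 4g + 4)x − 2n² + 4bgn + 4gn + 2n − 2b²g² − 4bg²
− 2bg − 4g` is positive. -/
theorem statement15 (b g n : ℕ) (hb : 2 ≤ b) (hg : 1 ≤ g) (hn : 6 * b * g ≤ n) :
    ∀ x : ℝ, 2 * (n : ℝ) - 2 * b * g ≤ x →
      0 < x ^ 2 + ((n : ℝ) - 4 * b * g - 4 * g + 4) * x
          - 2 * (n : ℝ) ^ 2 + 4 * b * g * n + 4 * g * n + 2 * n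
          - 2 * (b : ℝ) ^ 2 * g ^ 2 - 4 * b * g ^ 2 - 2 * b * g - 4 * g := by
  intro x hx
  have hb' : (2:ℝ) ≤ b := by exact_mod_cast hb
  have hg' : (1:ℝ) ≤ g := by exact_mod_cast hg
  have hn' : 6 * (b:ℝ) * g ≤ n := by exact_mod_cast hn
  have hbg : 2 * (g:ℝ) ≤ b * g := by nlinarith
  nlinarith [mul_nonneg (sub_nonneg.2 hx) (by nlinarith : (0:ℝ) ≤ x + (2*(n:ℝ) - 2*b*g) + (n - 4*b*g - 4*g + 4)),
    mul_nonneg (by linarith : (0:ℝ) ≤ (n:ℝ) - 6*b*g) (by nlinarith : (0:ℝ) ≤ (n:ℝ)),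
    mul_nonneg (by linarith : (0:ℝ) ≤ (n:ℝ) - 6*b*g) (by nlinarith : (0:ℝ) ≤ (b:ℝ)*g),
    mul_nonneg (by linarith : (0:ℝ) ≤ (b:ℝ)*g - 2*g) (by nlinarith : (0:ℝ) ≤ (b:ℝ)*g),
    mul_nonneg (by linarith : (0:ℝ) ≤ (g:ℝ) - 1) (by nlinarith : (0:ℝ) ≤ (b:ℝ)*g)]
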